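/- Let v₁ = (0, φ) and v₂ = (d_θ, φ) be two points at latitude φ on the unit sphere (in polar coordinates) with ‖v₁ − v₂‖ = r, and let u = (τ, ψ) be a point with ‖v₁ − u‖ = ‖v₂ − u‖ = r and ψ < φ. Then τ = d_θ/2 = arcsin(r/(2 cos φ)). -/
import Mathlib

open Metric Real
noncomputable section
abbrev E3 := EuclideanSpace ℝ (Fin 3)

/-- The point at longitude `θ` and latitude `φ` on the unit sphere. -/
def polar (θ φ : ℝ) : E3 :=
  (WithLp.equiv 2 (Fin 3 → ℝ)).symm ![Real.cos φ * Real.cos θ, Real.cos φ * Real.sin θ, Real.sin φ]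

lemma norm_sq_polar (θ₁ φ₁ θ₂ φ₂ : ℝ) :
    ‖polar θ₁ φ₁ - polar θ₂ φ₂‖ ^ 2 =
      2 - 2 * (Real.cos φ₁ * Real.cos φ₂ * Real.cos (θ₁ - θ₂) + Real.sin φ₁ * Real.sin φ₂) := by
  rw [EuclideanSpace.norm_eq, Real.sq_sqrt (by positivity)]
  simp [polar, Fin.sum_univ_three, Real.cos_sub]
  have h1 := Real.sin_sq_add_cos_sq φ₁
  have h2 := Real.sin_sq_add_cos_sq φ₂
  have h3 := Real.sin_sq_add_cos_sq θ₁
  have h4 := Real.sin_sq_add_cos_sq θ₂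
  nlinarith [h1, h2, h3, h4]

/-- If `v₁ = (0, φ)` and `v₂ = (dθ, φ)` are two points at latitude `φ` with chordal
distance `r`, and `u = (τ, ψ)` is equidistant from both at chordal distance `r` with
`ψ < φ`, then `τ = dθ/2 = arcsin (r / (2 cos φ))`. -/
theorem stmt6 (φ ψ τ dθ r : ℝ) (hφ0 : 0 ≤ φ) (hφ : φ < π / 2)
    (hψ : -(π / 2) < ψ) (hψφ : ψ < φ)
    (hr0 : 0 < r) (hr : r ≤ 2 * Real.cos φ)
    (hdθ0 : 0 ≤ dθ) (hdθ : dθ ≤ π) (hτ0 : 0 ≤ τ) (hτ : τ ≤ π / 2)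
    (hv : ‖polar 0 φ - polar dθ φ‖ = r)
    (hu1 : ‖polar 0 φ - polar τ ψ‖ = r) (hu2 : ‖polar dθ φ - polar τ ψ‖ = r) :
    τ = dθ / 2 ∧ τ = Real.arcsin (r / (2 * Real.cos φ)) := by
  have hcφ : 0 < Real.cos φ := Real.cos_pos_of_mem_Ioo ⟨by linarith [Real.pi_pos], hφ⟩
  have hcψ : 0 < Real.cos ψ := Real.cos_pos_of_mem_Ioo ⟨hψ, by linarith⟩
  have hv2 := norm_sq_polar 0 φ dθ φ
  have hu1sq := norm_sq_polar 0 φ τ ψ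
  have hu2sq := norm_sq_polar dθ φ τ ψ
  rw [hv, zero_sub, Real.cos_neg] at hv2
  rw [hu1, zero_sub, Real.cos_neg] at hu1sq
  rw [hu2] at hu2sq
  -- cos τ = cos (dθ - τ)
  have hkey : Real.cos τ = Real.cos (dθ - τ) := by
    have := hu1sq.symm.trans hu2sq
    have h : Real.cos φ * Real.cos ψ * Real.cos τ
        = Real.cos φ * Real.cos ψ * Real.cos (dθ - τ) := by linarith
    exact mul_left_cancel₀ (mul_pos hcφ hcψ).ne' h
  have hτeq : τ = dθ / 2 := by
    rcases le_or_gt τ dθ with h | h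
    · have := Real.injOn_cos ⟨hτ0, by linarith [Real.pi_pos]⟩
        ⟨by linarith, by linarith⟩ hkey
      linarith
    · exfalso
      rw [← Real.cos_neg (dθ - τ)] at hkey
      have := Real.injOn_cos ⟨hτ0, by linarith [Real.pi_pos]⟩
        ⟨by linarith, by linarith [Real.pi_pos, Real.pi_gt_three]⟩ hkey
      have hd0 : dθ = 0 := by linarith
      rw [hd0, Real.cos_zero] at hv2
      nlinarith [Real.sin_sq_add_cos_sq φ]
  refine ⟨hτeq, ?_⟩
  have hsin : Real.sin (dθ / 2) = r / (2 * Real.cos φ) := by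
    have hs0 : 0 ≤ Real.sin (dθ / 2) := Real.sin_nonneg_of_nonneg_of_le_pi (by linarith) (by linarith)
    have hcd : Real.cos dθ = 1 - 2 * Real.sin (dθ / 2) ^ 2 := by
      have h1 := Real.cos_two_mul (dθ / 2)
      rw [show 2 * (dθ / 2) = dθ by ring] at h1
      have h2 := Real.sin_sq_add_cos_sq (dθ / 2)
      nlinarith
    rw [eq_div_iff (by positivity)]
    have hsq : (Real.sin (dθ / 2) * (2 * Real.cos φ)) ^ 2 = r ^ 2 := by
      linear_combination (-1 : ℝ) * hv2 + 2 * Real.cos φ ^ 2 * hcd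
        + 2 * Real.sin_sq_add_cos_sq φ
    have hpos : 0 ≤ Real.sin (dθ / 2) * (2 * Real.cos φ) :=
      mul_nonneg hs0 (by positivity)
    clear hv hu1 hu2 hu1sq hu2sq hkey hv2
    nlinarith [hsq, hpos, hr0]
  rw [hτeq, ← hsin, Real.arcsin_sin (by linarith [Real.pi_pos]) (by linarith)]
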